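/- Let k be a field, let e ≥ 2 and k_e ≥ 1 be integers, and let π : {1,…,k_e} × {1,…,e} × ℕ → ℕ be an injective map. In the formal power series ring k[[x_i : i ∈ ℕ]], define for j = 1,…,k_e the homogeneous degree-e series f_j = Σ_{i∈ℕ} x_{π(j,1,i)} x_{π(j,2,i)} ⋯ x_{π(j,e,i)}. Then for every tuple (λ_1,…,λ_{k_e}) ∈ k^{k_e} with not all λ_j zero, the series λ_1 f_1 + … + λ_{k_e} f_{k_e} admits no strength decomposition, i.e., it cannot be written as a finite sum Σ_{j=1}^r G_j H_j where each G_j, H_j is a homogeneous power series of degree strictly between 0 and e. -/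

import Mathlib

open scoped Classical

/-- A formal power series in `k[[x_i : i ∈ ℕ]]` is homogeneous of degree `e` if every
monomial in its support has total degree `e`. -/
def MvPowerSeriesIsHomogeneous {k : Type*} [CommSemiring k]
    (F : MvPowerSeries ℕ k) (e : ℕ) : Prop :=
  ∀ d : ℕ →₀ ℕ, MvPowerSeries.coeff d F ≠ 0 → (d.sum fun _ n => n) = e


lemma exists_orth_vec {k : Type*} [Field k] {X τ : Type*} (A : Finset X) (T : Finset τ)
    (ψ : τ → X → k) :
    ∃ φ : X → k, (∀ p ∈ T, ∑ x ∈ A, φ x * ψ p x = 0) ∧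
      A.card ≤ T.card + (A.filter fun x => φ x ≠ 0).card := by
  classical
  let Φ : (↥A → k) →ₗ[k] (↥T → k) :=
    { toFun := fun v p => ∑ x : ↥A, v x * ψ p.1 x.1
      map_add' := by
        intro v w; funext p; simp [add_mul, Finset.sum_add_distrib]
      map_smul' := by
        intro a v; funext p; simp [Finset.mul_sum, mul_assoc] }
  have hker : A.card ≤ T.card + Module.finrank k (LinearMap.ker Φ) := by
    have h1 := LinearMap.finrank_range_add_finrank_ker Φ
    have h2 : Module.finrank k (↥A → k) = A.card := by
      rw [Module.finrank_fintype_fun_eq_card, Fintype.card_coe]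
    have h3 : Module.finrank k (LinearMap.range Φ) ≤ T.card := by
      have := Submodule.finrank_le (LinearMap.range Φ)
      rwa [Module.finrank_fintype_fun_eq_card, Fintype.card_coe] at this
    omega
  -- choose element of the kernel with maximal support
  set N : ↥(LinearMap.ker Φ) → ℕ :=
    fun w => (Finset.univ.filter fun x : ↥A => (w : ↥A → k) x ≠ 0).card with hN
  have hbdd : BddAbove (Set.range N) := by
    refine ⟨A.card, ?_⟩
    rintro n ⟨w, rfl⟩
    calc N w ≤ (Finset.univ : Finset ↥A).card := Finset.card_filter_le _ _
    _ = A.card := by simp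
  obtain ⟨w0, hw0⟩ : ∃ w0, N w0 = sSup (Set.range N) := by
    have := Nat.sSup_mem (s := Set.range N) ⟨N 0, ⟨0, rfl⟩⟩ hbdd
    exact this
  have hw0max : ∀ w, N w ≤ N w0 := by
    intro w; rw [hw0]; exact le_csSup hbdd ⟨w, rfl⟩
  -- the support of w0 has size ≥ finrank of the kernel
  set S : Finset ↥A := Finset.univ.filter fun x : ↥A => (w0 : ↥A → k) x ≠ 0 with hSdef
  have hrank : Module.finrank k (LinearMap.ker Φ) ≤ S.card := by
    by_contra hlt
    push_neg at hlt
    let ρ : ↥(LinearMap.ker Φ) →ₗ[k] (↥S → k) :=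
      (LinearMap.funLeft k k (fun x : ↥S => (x.1 : ↥A))) ∘ₗ (LinearMap.ker Φ).subtype
    have hni : ¬ Function.Injective ρ := by
      intro hinj
      have := LinearMap.finrank_le_finrank_of_injective hinj
      rw [Module.finrank_fintype_fun_eq_card, Fintype.card_coe] at this
      omega
    rw [← LinearMap.ker_eq_bot] at hni
    obtain ⟨w1, hw1mem, hw1ne⟩ := Submodule.exists_mem_ne_zero_of_ne_bot hni
    have hw1S : ∀ x ∈ S, (w1 : ↥A → k) x = 0 := by
      intro x hx
      have : ρ w1 = 0 := hw1mem
      have := congrFun this ⟨x, hx⟩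
      simpa [ρ, LinearMap.funLeft] using this
    obtain ⟨a, ha⟩ : ∃ a : ↥A, (w1 : ↥A → k) a ≠ 0 := by
      by_contra hc
      push_neg at hc
      apply hw1ne
      apply Subtype.ext
      funext x
      exact hc x
    have haS : a ∉ S := fun h => ha (hw1S a h)
    have hsub : S ⊂ Finset.univ.filter fun x : ↥A => ((w0 + w1 : ↥(LinearMap.ker Φ)) : ↥A → k) x ≠ 0 := by
      constructor
      · intro x hx
        rw [hSdef] at hx
        simp only [Finset.mem_filter, Finset.mem_univ, true_and] at hx ⊢
        rw [Submodule.coe_add, Pi.add_apply, hw1S x (by simp [hSdef, hx])]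
        simpa using hx
      · intro hsub'
        apply haS
        apply hsub'
        simp only [Finset.mem_filter, Finset.mem_univ, true_and]
        rw [Submodule.coe_add, Pi.add_apply]
        have : (w0 : ↥A → k) a = 0 := by
          by_contra hc
          exact haS (by simp [hSdef, hc])
        rw [this, zero_add]
        exact ha
    have h1 := Finset.card_lt_card hsub
    have h2 := hw0max (w0 + w1)
    simp only [hN] at h2
    rw [← hSdef] at h2
    omega
  -- now extend w0 to X → k
  set φ : X → k := fun x => if hx : x ∈ A then (w0 : ↥A → k) ⟨x, hx⟩ else 0 with hφ
  refine ⟨φ, ?_, ?_⟩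
  · intro p hp
    have hker0 : Φ w0 = 0 := w0.2
    have hz := congrFun hker0 ⟨p, hp⟩
    simp only [Φ, LinearMap.coe_mk, AddHom.coe_mk, Pi.zero_apply] at hz
    rw [← Finset.sum_attach A (fun x => φ x * ψ p x)]
    have heq : ∑ x ∈ A.attach, φ ↑x * ψ p ↑x = ∑ x ∈ A.attach, (w0 : ↥A → k) x * ψ p ↑x :=
      Finset.sum_congr rfl (fun x _ => by simp [hφ, x.2])
    rw [heq]
    exact hz
  · have hcardeq : (A.filter fun x => φ x ≠ 0).card = S.card := by
      apply Finset.card_bij (fun (x : X) hx => (⟨x, (Finset.mem_filter.mp hx).1⟩ : ↥A))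
      · intro x hx
        simp only [Finset.mem_filter, Finset.mem_univ, true_and, hSdef]
        obtain ⟨hxA, hxne⟩ := Finset.mem_filter.mp hx
        simpa [hφ, hxA] using hxne
      · intro x hx y hy h
        exact congrArg Subtype.val h
      · intro b hb
        refine ⟨b.1, Finset.mem_filter.mpr ⟨b.2, ?_⟩, by simp⟩
        rw [hSdef] at hb
        simp only [Finset.mem_filter] at hb
        simpa [hφ, b.2] using hb.2
    omega


lemma core_tensor {k : Type*} [Field k] {ι X τ : Type*} [DecidableEq ι] :
    ∀ (n : ℕ) (C : Finset ι), C.card = n → C.Nonempty →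
    ∀ (A : Finset X) (lam : X → k) (P : Finset τ) (B : τ → Finset ι)
      (f g : τ → (ι → X) → k),
      (∀ i ∈ A, lam i ≠ 0) →
      (∀ p ∈ P, (B p ∩ C).Nonempty) →
      (∀ p ∈ P, (C \ B p).Nonempty) →
      (∀ p ∈ P, ∀ c c' : ι → X, (∀ l ∈ B p ∩ C, c l = c' l) → f p c = f p c') →
      (∀ p ∈ P, ∀ c c' : ι → X, (∀ l ∈ C \ B p, c l = c' l) → g p c = g p c') →
      (∀ i ∈ A, ∀ c : ι → X, (∀ l ∈ C, c l = i) → ∑ p ∈ P, f p c * g p c = lam i) →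
      (∀ c : ι → X, (∀ l ∈ C, c l ∈ A) → (¬ ∃ i, ∀ l ∈ C, c l = i) →
        ∑ p ∈ P, f p c * g p c = 0) →
      A.card ≤ P.card := by
  intro n
  induction n with
  | zero =>
    intro C hC hCne
    rw [Finset.card_eq_zero] at hC
    subst hC
    exact absurd hCne (by simp)
  | succ n ih =>
    intro C hC hCne A lam P B f g hlam hB1 hB2 hf hg hdiag hoff
    obtain ⟨l, hl⟩ := hCne
    by_cases hn : n = 0
    · -- base case : C is a singleton, P must be empty, A must be empty
      subst hn
      obtain ⟨a, ha⟩ := Finset.card_eq_one.mp hC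
      have hal : a = l := by rw [ha] at hl; exact (by simpa using hl : l = a).symm
      subst hal
      have hP : P = ∅ := by
        apply Finset.eq_empty_of_forall_notMem
        intro p hp
        obtain ⟨x, hx⟩ := hB1 p hp
        obtain ⟨y, hy⟩ := hB2 p hp
        rw [ha] at hx hy
        simp only [Finset.mem_inter, Finset.mem_sdiff, Finset.mem_singleton] at hx hy
        obtain ⟨hx1, hx2⟩ := hx
        obtain ⟨hy1, hy2⟩ := hy
        rw [hx2] at hx1
        rw [hy1] at hy2
        exact hy2 hx1
      have hA : A = ∅ := by
        apply Finset.eq_empty_of_forall_notMem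
        intro i hi
        have := hdiag i hi (fun _ => i) (fun _ _ => rfl)
        rw [hP] at this
        simp at this
        exact hlam i hi this.symm
      simp [hA]
    · -- main step
      have hnpos : 0 < n := Nat.pos_of_ne_zero hn
      set C' := C.erase l with hC'def
      have hC'card : C'.card = n := by
        rw [hC'def, Finset.card_erase_of_mem hl, hC]
        omega
      have hC'ne : C'.Nonempty := by
        rw [← Finset.card_pos, hC'card]; exact hnpos
      set bad := P.filter (fun p => B p ∩ C = {l} ∨ C \ B p = {l}) with hbaddef
      have hbadsub : bad ⊆ P := Finset.filter_subset _ _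
      -- the single-variable functions attached to bad indices
      set ψ0 : τ → X → k :=
        fun p x => if B p ∩ C = {l} then f p (fun _ => x) else g p (fun _ => x) with hψ0
      obtain ⟨φ, hφorth, hφcard⟩ := exists_orth_vec A bad ψ0
      set A' := A.filter (fun x => φ x ≠ 0) with hA'def
      have hA'sub : A' ⊆ A := Finset.filter_subset _ _
      set P' := P \ bad with hP'def
      have hP'sub : P' ⊆ P := Finset.sdiff_subset
      set f' : τ → (ι → X) → k := fun p c =>
        if l ∈ B p then ∑ x ∈ A, φ x * f p (Function.update c l x) else f p c with hf'def
      set g' : τ → (ι → X) → k := fun p c =>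
        if l ∈ B p then g p c else ∑ x ∈ A, φ x * g p (Function.update c l x) with hg'def
      -- key pointwise identities
      have hupdf : ∀ p ∈ P, l ∈ B p → ∀ (c : ι → X) (x : X),
          g p (Function.update c l x) = g p c := by
        intro p hp hlB c x
        apply hg p hp
        intro l' hl'
        rw [Finset.mem_sdiff] at hl'
        have : l' ≠ l := fun h => hl'.2 (h ▸ hlB)
        rw [Function.update_of_ne this]
      have hupdg : ∀ p ∈ P, l ∉ B p → ∀ (c : ι → X) (x : X),
          f p (Function.update c l x) = f p c := by
        intro p hp hlB c x
        apply hf p hp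
        intro l' hl'
        rw [Finset.mem_inter] at hl'
        have : l' ≠ l := fun h => hlB (h ▸ hl'.1)
        rw [Function.update_of_ne this]
      have key1 : ∀ p ∈ P', ∀ c : ι → X,
          f' p c * g' p c = ∑ x ∈ A, φ x * (f p (Function.update c l x) * g p (Function.update c l x)) := by
        intro p hp c
        have hpP : p ∈ P := hP'sub hp
        by_cases hlB : l ∈ B p
        · rw [hf'def, hg'def]
          simp only [if_pos hlB]
          rw [Finset.sum_mul]
          apply Finset.sum_congr rfl
          intro x _
          rw [hupdf p hpP hlB c x]
          ring
        · rw [hf'def, hg'def]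
          simp only [if_neg hlB]
          rw [Finset.mul_sum]
          apply Finset.sum_congr rfl
          intro x _
          rw [hupdg p hpP hlB c x]
          ring
      have key2 : ∀ p ∈ bad, ∀ c : ι → X,
          ∑ x ∈ A, φ x * (f p (Function.update c l x) * g p (Function.update c l x)) = 0 := by
        intro p hp c
        have hpP : p ∈ P := hbadsub hp
        have hpbad := (Finset.mem_filter.mp hp).2
        by_cases hcase : B p ∩ C = {l}
        · have hlB : l ∈ B p := by
            have : l ∈ B p ∩ C := by rw [hcase]; exact Finset.mem_singleton_self l
            exact (Finset.mem_inter.mp this).1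
          have : ∀ x : X, f p (Function.update c l x) = ψ0 p x := by
            intro x
            rw [hψ0]
            simp only [if_pos hcase]
            apply hf p hpP
            intro l' hl'
            rw [hcase, Finset.mem_singleton] at hl'
            subst hl'
            rw [Function.update_self]
          calc ∑ x ∈ A, φ x * (f p (Function.update c l x) * g p (Function.update c l x))
              = ∑ x ∈ A, (φ x * ψ0 p x) * g p c := by
                apply Finset.sum_congr rfl
                intro x _
                rw [this x, hupdf p hpP hlB c x]
                ring
            _ = (∑ x ∈ A, φ x * ψ0 p x) * g p c := by rw [Finset.sum_mul]
            _ = 0 := by rw [hφorth p hp, zero_mul]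
        · have hcase2 : C \ B p = {l} := hpbad.resolve_left hcase
          have hlB : l ∉ B p := by
            have : l ∈ C \ B p := by rw [hcase2]; exact Finset.mem_singleton_self l
            exact (Finset.mem_sdiff.mp this).2
          have : ∀ x : X, g p (Function.update c l x) = ψ0 p x := by
            intro x
            rw [hψ0]
            simp only [if_neg hcase]
            apply hg p hpP
            intro l' hl'
            rw [hcase2, Finset.mem_singleton] at hl'
            subst hl'
            rw [Function.update_self]
          calc ∑ x ∈ A, φ x * (f p (Function.update c l x) * g p (Function.update c l x))
              = ∑ x ∈ A, (φ x * ψ0 p x) * f p c := by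
                apply Finset.sum_congr rfl
                intro x _
                rw [this x, hupdg p hpP hlB c x]
                ring
            _ = (∑ x ∈ A, φ x * ψ0 p x) * f p c := by rw [Finset.sum_mul]
            _ = 0 := by rw [hφorth p hp, zero_mul]
      have key3 : ∀ c : ι → X, ∑ p ∈ P', f' p c * g' p c =
          ∑ x ∈ A, φ x * ∑ p ∈ P, f p (Function.update c l x) * g p (Function.update c l x) := by
        intro c
        have h1 : ∑ p ∈ P', f' p c * g' p c =
            ∑ p ∈ P', ∑ x ∈ A, φ x * (f p (Function.update c l x) * g p (Function.update c l x)) :=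
          Finset.sum_congr rfl (fun p hp => key1 p hp c)
        have h2 : ∑ p ∈ P, ∑ x ∈ A, φ x * (f p (Function.update c l x) * g p (Function.update c l x)) =
            ∑ p ∈ P', ∑ x ∈ A, φ x * (f p (Function.update c l x) * g p (Function.update c l x)) := by
          rw [← Finset.sum_sdiff hbadsub, ← hP'def]
          have : ∑ p ∈ bad, ∑ x ∈ A, φ x * (f p (Function.update c l x) * g p (Function.update c l x)) = 0 :=
            Finset.sum_eq_zero (fun p hp => key2 p hp c)
          rw [this, add_zero]
        rw [h1, ← h2, Finset.sum_comm]
        apply Finset.sum_congr rfl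
        intro x _
        rw [Finset.mul_sum]
      -- now apply the induction hypothesis
      have main := ih C' hC'card hC'ne A' (fun i => lam i * φ i) P' B f' g' ?_ ?_ ?_ ?_ ?_ ?_ ?_
      · -- conclude
        have hbadcard : P'.card = P.card - bad.card := by
          rw [hP'def, Finset.card_sdiff_of_subset hbadsub]
        have hble : bad.card ≤ P.card := Finset.card_le_card hbadsub
        omega
      · -- lam' nonzero on A'
        intro i hi
        rw [hA'def, Finset.mem_filter] at hi
        exact mul_ne_zero (hlam i hi.1) hi.2
      · -- B ∩ C' nonempty
        intro p hp
        have hpP : p ∈ P := hP'sub hp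
        have hpnb : p ∉ bad := (Finset.mem_sdiff.mp hp).2
        obtain ⟨x, hx⟩ := hB1 p hpP
        by_cases hlB : l ∈ B p
        · have hne : B p ∩ C ≠ {l} := by
            intro h
            exact hpnb (Finset.mem_filter.mpr ⟨hpP, Or.inl h⟩)
          obtain ⟨y, hy, hyl⟩ : ∃ y ∈ B p ∩ C, y ≠ l := by
            by_contra hcon
            push_neg at hcon
            apply hne
            apply Finset.Subset.antisymm
            · intro z hz; rw [Finset.mem_singleton]; exact hcon z hz
            · intro z hz; rw [Finset.mem_singleton] at hz; subst hz
              exact Finset.mem_inter.mpr ⟨hlB, hl⟩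
          exact ⟨y, by
            rw [hC'def, Finset.mem_inter, Finset.mem_erase]
            rw [Finset.mem_inter] at hy
            exact ⟨hy.1, hyl, hy.2⟩⟩
        · refine ⟨x, ?_⟩
          rw [Finset.mem_inter] at hx
          rw [hC'def, Finset.mem_inter, Finset.mem_erase]
          exact ⟨hx.1, fun h => hlB (h ▸ hx.1), hx.2⟩
      · -- C' \ B nonempty
        intro p hp
        have hpP : p ∈ P := hP'sub hp
        have hpnb : p ∉ bad := (Finset.mem_sdiff.mp hp).2
        obtain ⟨x, hx⟩ := hB2 p hpP
        by_cases hlB : l ∈ B p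
        · refine ⟨x, ?_⟩
          rw [Finset.mem_sdiff] at hx
          rw [hC'def, Finset.mem_sdiff, Finset.mem_erase]
          exact ⟨⟨fun h => hx.2 (h ▸ hlB), hx.1⟩, hx.2⟩
        · have hne : C \ B p ≠ {l} := by
            intro h
            exact hpnb (Finset.mem_filter.mpr ⟨hpP, Or.inr h⟩)
          obtain ⟨y, hy, hyl⟩ : ∃ y ∈ C \ B p, y ≠ l := by
            by_contra hcon
            push_neg at hcon
            apply hne
            apply Finset.Subset.antisymm
            · intro z hz; rw [Finset.mem_singleton]; exact hcon z hz
            · intro z hz; rw [Finset.mem_singleton] at hz; subst hz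
              exact Finset.mem_sdiff.mpr ⟨hl, hlB⟩
          refine ⟨y, ?_⟩
          rw [Finset.mem_sdiff] at hy
          rw [hC'def, Finset.mem_sdiff, Finset.mem_erase]
          exact ⟨⟨hyl, hy.1⟩, hy.2⟩
      · -- f' depends only on B ∩ C'
        intro p hp c c' hcc
        have hpP : p ∈ P := hP'sub hp
        by_cases hlB : l ∈ B p
        · rw [hf'def]
          simp only [if_pos hlB]
          apply Finset.sum_congr rfl
          intro x _
          congr 1
          apply hf p hpP
          intro l' hl'
          by_cases hll : l' = l
          · subst hll; rw [Function.update_self, Function.update_self]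
          · rw [Function.update_of_ne hll, Function.update_of_ne hll]
            apply hcc
            rw [Finset.mem_inter] at hl'
            rw [hC'def, Finset.mem_inter, Finset.mem_erase]
            exact ⟨hl'.1, hll, hl'.2⟩
        · rw [hf'def]
          simp only [if_neg hlB]
          apply hf p hpP
          intro l' hl'
          apply hcc
          rw [Finset.mem_inter] at hl'
          have hll : l' ≠ l := fun h => hlB (h ▸ hl'.1)
          rw [hC'def, Finset.mem_inter, Finset.mem_erase]
          exact ⟨hl'.1, hll, hl'.2⟩
      · -- g' depends only on C' \ B
        intro p hp c c' hcc
        have hpP : p ∈ P := hP'sub hp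
        by_cases hlB : l ∈ B p
        · rw [hg'def]
          simp only [if_pos hlB]
          apply hg p hpP
          intro l' hl'
          apply hcc
          rw [Finset.mem_sdiff] at hl'
          have hll : l' ≠ l := fun h => hl'.2 (h ▸ hlB)
          rw [hC'def, Finset.mem_sdiff, Finset.mem_erase]
          exact ⟨⟨hll, hl'.1⟩, hl'.2⟩
        · rw [hg'def]
          simp only [if_neg hlB]
          apply Finset.sum_congr rfl
          intro x _
          congr 1
          apply hg p hpP
          intro l' hl'
          by_cases hll : l' = l
          · subst hll; rw [Function.update_self, Function.update_self]
          · rw [Function.update_of_ne hll, Function.update_of_ne hll]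
            apply hcc
            rw [Finset.mem_sdiff] at hl'
            rw [hC'def, Finset.mem_sdiff, Finset.mem_erase]
            exact ⟨⟨hll, hl'.1⟩, hl'.2⟩
      · -- diagonal values
        intro i hi c hc
        have hiA : i ∈ A := hA'sub hi
        have hφi : φ i ≠ 0 := (Finset.mem_filter.mp hi).2
        rw [key3 c]
        have hval : ∀ x ∈ A, φ x * ∑ p ∈ P, f p (Function.update c l x) * g p (Function.update c l x) =
            φ x * (if x = i then lam i else 0) := by
          intro x hx
          congr 1
          by_cases hxi : x = i
          · subst hxi
            rw [if_pos rfl]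
            apply hdiag x hiA
            intro l' hl'
            by_cases hll : l' = l
            · subst hll; rw [Function.update_self]
            · rw [Function.update_of_ne hll]
              exact hc l' (Finset.mem_erase.mpr ⟨hll, hl'⟩)
          · rw [if_neg hxi]
            apply hoff
            · intro l' hl'
              by_cases hll : l' = l
              · subst hll; rw [Function.update_self]; exact hx
              · rw [Function.update_of_ne hll]
                rw [hc l' (Finset.mem_erase.mpr ⟨hll, hl'⟩)]
                exact hiA
            · rintro ⟨j, hj⟩
              obtain ⟨l0, hl0⟩ := hC'ne
              have h1 : Function.update c l x l = x := Function.update_self _ _ _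
              have h2 : Function.update c l x l0 = i := by
                have : l0 ≠ l := (Finset.mem_erase.mp (hC'def ▸ hl0)).1
                rw [Function.update_of_ne this]
                exact hc l0 hl0
              have hjx : j = x := by rw [← h1]; exact (hj l hl).symm
              have hji : j = i := by
                rw [← h2]
                refine (hj l0 ?_).symm
                exact Finset.mem_of_mem_erase (hC'def ▸ hl0)
              exact hxi (hjx ▸ hji)
        rw [Finset.sum_congr rfl hval]
        rw [Finset.sum_eq_single i]
        · rw [if_pos rfl]; ring
        · intro x _ hxi; rw [if_neg hxi, mul_zero]
        · intro h; exact absurd hiA h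
      · -- off-diagonal values
        intro c hcA hcne
        rw [key3 c]
        apply Finset.sum_eq_zero
        intro x hx
        rw [hoff _ ?_ ?_, mul_zero]
        · intro l' hl'
          by_cases hll : l' = l
          · subst hll; rw [Function.update_self]; exact hx
          · rw [Function.update_of_ne hll]
            exact hA'sub (hcA l' (Finset.mem_erase.mpr ⟨hll, hl'⟩))
        · rintro ⟨j, hj⟩
          apply hcne
          refine ⟨j, fun l' hl' => ?_⟩
          have hll : l' ≠ l := (Finset.mem_erase.mp (hC'def ▸ hl')).1
          have := hj l' (Finset.mem_of_mem_erase (hC'def ▸ hl'))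
          rwa [Function.update_of_ne hll] at this


lemma eval_sum_single {e : ℕ} (x : Fin e → ℕ) (hx : Function.Injective x)
    (B : Finset (Fin e)) (l0 : Fin e) :
    (∑ l ∈ B, Finsupp.single (x l) (1 : ℕ)) (x l0) = if l0 ∈ B then 1 else 0 := by
  rw [Finsupp.finset_sum_apply]
  rw [Finset.sum_congr rfl (fun l _ => ?_)]
  · exact Finset.sum_ite_eq' B l0 (fun _ => 1)
  · rw [Finsupp.single_apply]
    congr 1
    simp [hx.eq_iff, eq_comm]

lemma eval_sum_single_notmem {e : ℕ} (x : Fin e → ℕ) (B : Finset (Fin e)) (y : ℕ)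
    (hy : ∀ l, x l ≠ y) :
    (∑ l ∈ B, Finsupp.single (x l) (1 : ℕ)) y = 0 := by
  rw [Finsupp.finset_sum_apply]
  apply Finset.sum_eq_zero
  intro l _
  rw [Finsupp.single_apply, if_neg (hy l)]

lemma sum_antidiagonal_squarefree {M : Type*} [AddCommMonoid M] {e : ℕ} (x : Fin e → ℕ)
    (hx : Function.Injective x) (F : (ℕ →₀ ℕ) → (ℕ →₀ ℕ) → M) :
    ∑ p ∈ Finset.HasAntidiagonal.antidiagonal (∑ l, Finsupp.single (x l) 1), F p.1 p.2 =
    ∑ B ∈ (Finset.univ : Finset (Finset (Fin e))),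
      F (∑ l ∈ B, Finsupp.single (x l) 1) (∑ l ∈ Bᶜ, Finsupp.single (x l) 1) := by
  have key : ∀ p ∈ Finset.HasAntidiagonal.antidiagonal (∑ l, Finsupp.single (x l) (1:ℕ)),
      p.1 = (∑ l ∈ Finset.univ.filter (fun l => p.1 (x l) ≠ 0), Finsupp.single (x l) 1) ∧
      p.2 = (∑ l ∈ (Finset.univ.filter (fun l => p.1 (x l) ≠ 0))ᶜ, Finsupp.single (x l) 1) := by
    intro p hp
    rw [Finset.HasAntidiagonal.mem_antidiagonal] at hp
    have hpt : ∀ l0 : Fin e, p.1 (x l0) + p.2 (x l0) = 1 := by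
      intro l0
      have := congrArg (fun d => d (x l0)) hp
      simp only [Finsupp.add_apply] at this
      rw [this, eval_sum_single x hx Finset.univ l0, if_pos (Finset.mem_univ _)]
    have hpn : ∀ y : ℕ, (∀ l, x l ≠ y) → p.1 y = 0 ∧ p.2 y = 0 := by
      intro y hy
      have := congrArg (fun d => d y) hp
      simp only [Finsupp.add_apply] at this
      rw [eval_sum_single_notmem x Finset.univ y hy] at this
      omega
    constructor
    · ext y
      by_cases hy : ∃ l, x l = y
      · obtain ⟨l, rfl⟩ := hy
        rw [eval_sum_single x hx _ l]
        simp only [Finset.mem_filter, Finset.mem_univ, true_and]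
        have := hpt l
        split_ifs with h
        · omega
        · push_neg at h; omega
      · push_neg at hy
        rw [eval_sum_single_notmem x _ y hy]
        exact (hpn y hy).1
    · ext y
      by_cases hy : ∃ l, x l = y
      · obtain ⟨l, rfl⟩ := hy
        rw [eval_sum_single x hx _ l]
        simp only [Finset.mem_compl, Finset.mem_filter, Finset.mem_univ, true_and, not_not]
        have := hpt l
        split_ifs with h
        · omega
        · omega
      · push_neg at hy
        rw [eval_sum_single_notmem x _ y hy]
        exact (hpn y hy).2
  apply Finset.sum_nbij'
    (i := fun p => Finset.univ.filter (fun l => p.1 (x l) ≠ 0))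
    (j := fun B => (∑ l ∈ B, Finsupp.single (x l) 1, ∑ l ∈ Bᶜ, Finsupp.single (x l) 1))
  · intro p _
    exact Finset.mem_univ _
  · intro B _
    rw [Finset.HasAntidiagonal.mem_antidiagonal]
    rw [← Finset.sum_add_sum_compl B (fun l => Finsupp.single (x l) (1:ℕ))]
  · intro p hp
    obtain ⟨h1, h2⟩ := key p hp
    exact Prod.ext h1.symm h2.symm
  · intro B _
    ext l
    simp only [Finset.mem_filter, Finset.mem_univ, true_and]
    rw [eval_sum_single x hx B l]
    split_ifs with h
    · simpa using h
    · simpa using h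
  · intro p hp
    obtain ⟨h1, h2⟩ := key p hp
    rw [← h1, ← h2]

/-- Let `e ≥ 2`, `k_e ≥ 1` and let `π : {1,…,k_e} × {1,…,e} × ℕ → ℕ` be injective. For
`j = 1,…,k_e` let `f_j = ∑_{i ∈ ℕ} x_{π(j,1,i)} ⋯ x_{π(j,e,i)}` (a homogeneous degree-`e`
power series, specified here by its coefficients). Then every nonzero linear combination
`λ_1 f_1 + … + λ_{k_e} f_{k_e}` admits no strength decomposition: it is not a finite sum
`∑_{j=1}^r G_j H_j` with each `G_j`, `H_j` homogeneous of degree strictly between `0`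
and `e`. -/
theorem no_strength_decomposition_of_generic_series {k : Type*} [Field k]
    (e ke : ℕ) (he : 2 ≤ e) (hke : 1 ≤ ke)
    (π : Fin ke × Fin e × ℕ → ℕ) (hπ : Function.Injective π)
    (f : Fin ke → MvPowerSeries ℕ k)
    (hf : ∀ (j : Fin ke) (d : ℕ →₀ ℕ),
      MvPowerSeries.coeff d (f j) =
        if ∃ i : ℕ, d = ∑ l : Fin e, Finsupp.single (π (j, l, i)) 1 then 1 else 0)
    (lam : Fin ke → k) (hlam : lam ≠ 0) :
    ¬ ∃ (r : ℕ) (G H : Fin r → MvPowerSeries ℕ k) (a b : Fin r → ℕ),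
      (∀ i, 1 ≤ a i ∧ a i ≤ e - 1 ∧ MvPowerSeriesIsHomogeneous (G i) (a i)) ∧
      (∀ i, 1 ≤ b i ∧ b i ≤ e - 1 ∧ MvPowerSeriesIsHomogeneous (H i) (b i)) ∧
      (∑ j, lam j • f j) = ∑ i, G i * H i := by
  rintro ⟨r, G, H, a, b, hG, hH, hFdec⟩
  obtain ⟨j0, hj0⟩ : ∃ j0, lam j0 ≠ 0 := by
    by_contra hc
    push_neg at hc
    exact hlam (funext hc)
  -- the slot-variable maps
  set x : (Fin e → ℕ) → Fin e → ℕ := fun c l => π (j0, l, c l) with hxdef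
  have hxinj : ∀ c : Fin e → ℕ, Function.Injective (x c) := by
    intro c l l' h
    have h2 := hπ h
    rw [Prod.ext_iff] at h2
    rw [Prod.ext_iff] at h2
    exact h2.2.1
  -- monomials
  set d : (Fin e → ℕ) → (ℕ →₀ ℕ) := fun c => ∑ l, Finsupp.single (x c l) 1 with hddef
  set u : (Fin e → ℕ) → Finset (Fin e) → (ℕ →₀ ℕ) :=
    fun c B => ∑ l ∈ B, Finsupp.single (x c l) 1 with hudef
  -- coefficient of each f j at d c
  have hcoefff : ∀ (j : Fin ke) (c : Fin e → ℕ),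
      MvPowerSeries.coeff (d c) (f j) =
      if j = j0 ∧ ∃ i, ∀ l, c l = i then 1 else 0 := by
    intro j c
    rw [hf j (d c)]
    by_cases hcon : ∃ i : ℕ, d c = ∑ l : Fin e, Finsupp.single (π (j, l, i)) 1
    · rw [if_pos hcon]
      obtain ⟨i, hi⟩ := hcon
      have hkey : ∀ l : Fin e, c l = i ∧ j = j0 := by
        intro l
        have h1 : (d c) (x c l) = 1 := by
          rw [hddef]
          rw [eval_sum_single (x c) (hxinj c) Finset.univ l]
          simp
        rw [hi] at h1
        have h2 : ∃ l' : Fin e, π (j, l', i) = x c l := by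
          by_contra hc
          push_neg at hc
          rw [eval_sum_single_notmem (fun l' => π (j, l', i)) Finset.univ (x c l) hc] at h1
          exact one_ne_zero h1.symm
        obtain ⟨l', hl'⟩ := h2
        have := hπ hl'
        rw [Prod.ext_iff] at this
        obtain ⟨hj, hrest⟩ := this
        rw [Prod.ext_iff] at hrest
        exact ⟨hrest.2.symm, hj⟩
      have hl0 : (0 : ℕ) < e := by omega
      rw [if_pos ⟨(hkey ⟨0, hl0⟩).2, i, fun l => (hkey l).1⟩]
    · rw [if_neg hcon, if_neg ?_]
      rintro ⟨hj, i, hi⟩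
      apply hcon
      refine ⟨i, ?_⟩
      rw [hddef]
      apply Finset.sum_congr rfl
      intro l _
      rw [hxdef]
      simp only
      rw [hi l, hj]
  -- coefficient of the combination at d c
  have hFcoeff : ∀ c : Fin e → ℕ,
      MvPowerSeries.coeff (d c) (∑ j, lam j • f j) =
      if ∃ i, ∀ l, c l = i then lam j0 else 0 := by
    intro c
    rw [map_sum]
    have : ∀ j : Fin ke, MvPowerSeries.coeff (d c) (lam j • f j) =
        lam j * (if j = j0 ∧ ∃ i, ∀ l, c l = i then 1 else 0) := by
      intro j
      rw [map_smul, smul_eq_mul, hcoefff j c]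
    rw [Finset.sum_congr rfl (fun j _ => this j)]
    by_cases hcon : ∃ i, ∀ l : Fin e, c l = i
    · rw [if_pos hcon]
      have : ∀ j : Fin ke, lam j * (if j = j0 ∧ ∃ i, ∀ l, c l = i then 1 else 0) =
          if j = j0 then lam j else 0 := by
        intro j
        by_cases hj : j = j0
        · rw [if_pos ⟨hj, hcon⟩, if_pos hj, mul_one]
        · rw [if_neg (fun h => hj h.1), if_neg hj, mul_zero]
      rw [Finset.sum_congr rfl (fun j _ => this j)]
      rw [Finset.sum_ite_eq' Finset.univ j0 (fun j => lam j)]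
      rw [if_pos (Finset.mem_univ _)]
    · rw [if_neg hcon]
      apply Finset.sum_eq_zero
      intro j _
      rw [if_neg (fun h => hcon h.2), mul_zero]
  -- the decomposition side
  have hGHcoeff : ∀ c : Fin e → ℕ,
      MvPowerSeries.coeff (d c) (∑ t, G t * H t) =
      ∑ t : Fin r, ∑ B : Finset (Fin e),
        MvPowerSeries.coeff (u c B) (G t) * MvPowerSeries.coeff (u c Bᶜ) (H t) := by
    intro c
    rw [map_sum]
    apply Finset.sum_congr rfl
    intro t _
    rw [MvPowerSeries.coeff_mul]
    exact sum_antidiagonal_squarefree (x c) (hxinj c)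
      (fun p q => MvPowerSeries.coeff p (G t) * MvPowerSeries.coeff q (H t))
  -- set up the application of core_tensor
  set τ := Fin r × Finset (Fin e) with hτdef
  set P : Finset τ := Finset.univ.filter
    (fun p => p.2 ≠ ∅ ∧ p.2 ≠ Finset.univ) with hPdef
  set ff : τ → (Fin e → ℕ) → k := fun p c => MvPowerSeries.coeff (u c p.2) (G p.1) with hffdef
  set gg : τ → (Fin e → ℕ) → k := fun p c => MvPowerSeries.coeff (u c p.2ᶜ) (H p.1) with hggdef
  have hu0 : ∀ c : Fin e → ℕ, u c ∅ = 0 := by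
    intro c; rw [hudef]; simp
  have hGzero : ∀ t : Fin r, MvPowerSeries.coeff (0 : ℕ →₀ ℕ) (G t) = 0 := by
    intro t
    by_contra hc
    have := (hG t).2.2 0 hc
    rw [Finsupp.sum_zero_index] at this
    have := (hG t).1
    omega
  have hHzero : ∀ t : Fin r, MvPowerSeries.coeff (0 : ℕ →₀ ℕ) (H t) = 0 := by
    intro t
    by_contra hc
    have := (hH t).2.2 0 hc
    rw [Finsupp.sum_zero_index] at this
    have := (hH t).1
    omega
  have hsumP : ∀ c : Fin e → ℕ, ∑ p ∈ P, ff p c * gg p c =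
      MvPowerSeries.coeff (d c) (∑ t, G t * H t) := by
    intro c
    rw [hGHcoeff c]
    have hprod : ∑ p ∈ (Finset.univ : Finset τ), ff p c * gg p c =
        ∑ t : Fin r, ∑ B : Finset (Fin e),
          MvPowerSeries.coeff (u c B) (G t) * MvPowerSeries.coeff (u c Bᶜ) (H t) :=
      Fintype.sum_prod_type _
    rw [← hprod, hPdef]
    apply Finset.sum_filter_of_ne
    intro p _ hne
    constructor
    · intro h
      apply hne
      rw [hffdef]
      simp only
      rw [h, hu0 c, hGzero p.1, zero_mul]
    · intro h
      apply hne
      rw [hggdef]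
      simp only
      rw [h, Finset.compl_univ, hu0 c, hHzero p.1, mul_zero]
  -- apply the core tensor lemma
  have hC : (Finset.univ : Finset (Fin e)).card = e := by simp
  have hCne : (Finset.univ : Finset (Fin e)).Nonempty := by
    refine ⟨⟨0, by omega⟩, Finset.mem_univ _⟩
  set A : Finset ℕ := Finset.range (Fintype.card τ + 1) with hAdef
  have main := core_tensor e Finset.univ hC hCne A (fun _ => lam j0) P (fun p => p.2) ff gg
    (fun i _ => hj0)
    ?_ ?_ ?_ ?_ ?_ ?_
  · have h1 : A.card = Fintype.card τ + 1 := by rw [hAdef, Finset.card_range]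
    have h2 : P.card ≤ Fintype.card τ := by
      calc P.card ≤ (Finset.univ : Finset τ).card := Finset.card_le_card (Finset.filter_subset _ _)
      _ = Fintype.card τ := Finset.card_univ
    omega
  · intro p hp
    rw [Finset.inter_univ]
    rw [hPdef, Finset.mem_filter] at hp
    exact Finset.nonempty_iff_ne_empty.mpr hp.2.1
  · intro p hp
    rw [← Finset.compl_eq_univ_sdiff]
    rw [hPdef, Finset.mem_filter] at hp
    rw [Finset.nonempty_iff_ne_empty]
    intro h
    exact hp.2.2 (by rwa [Finset.compl_eq_empty_iff] at h)
  · intro p _ c c' hcc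
    have huu : u c p.2 = u c' p.2 := by
      rw [hudef]
      apply Finset.sum_congr rfl
      intro l hl
      rw [hxdef]
      simp only
      rw [hcc l (Finset.mem_inter.mpr ⟨hl, Finset.mem_univ _⟩)]
    rw [hffdef]
    simp only
    rw [huu]
  · intro p _ c c' hcc
    have huu : u c p.2ᶜ = u c' p.2ᶜ := by
      rw [hudef]
      apply Finset.sum_congr rfl
      intro l hl
      rw [hxdef]
      simp only
      rw [hcc l (Finset.mem_sdiff.mpr ⟨Finset.mem_univ _, (Finset.mem_compl.mp hl)⟩)]
    rw [hggdef]
    simp only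
    rw [huu]
  · intro i _ c hc
    rw [hsumP c, ← hFdec, hFcoeff c]
    rw [if_pos ⟨i, fun l => hc l (Finset.mem_univ _)⟩]
  · intro c _ hcne
    rw [hsumP c, ← hFdec, hFcoeff c]
    rw [if_neg]
    rintro ⟨i, hi⟩
    exact hcne ⟨i, fun l _ => hi l⟩
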